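/- arXiv:1911.12464 — 7 statements merged into one kernel-verified Lean document; each statement's English description precedes it below -/
import Mathlib

section
/- Let S be a finite set of palindromes over a finite alphabet Σ, and let ℓ be the maximum length of a word in S. Then the language C_Σ(S) = { x ∈ Σ* : every palindromic factor of x lies in S } coincides with the complement of the union, over all palindromes t of length at most ℓ+2 not in S, of Σ* t Σ*. In particular, C_Σ(S) is a regular language. -/
def IsFactor {α : Type*} (y x : List α) : Prop := ∃ u v, x = u ++ y ++ v

def IsPal {α : Type*} (y : List α) : Prop := y.reverse = y

/-- The language of words all of whose palindromic factors lie in `S`. -/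
def CLang {α : Type*} (S : Finset (List α)) : Language α :=
  {x | ∀ y, IsFactor y x → IsPal y → y ∈ S}

section Aux

variable {α : Type*}

instance boundedListFintype (α : Type*) [Fintype α] [DecidableEq α] (n : ℕ) :
    Fintype {l : List α // l.length ≤ n} := by
  apply Fintype.ofSurjective
    (f := fun p : Σ k : Fin (n+1), (Fin k → α) =>
      (⟨List.ofFn p.2, by simpa using Nat.lt_succ_iff.mp p.1.2⟩ : {l : List α // l.length ≤ n}))
  rintro ⟨l, hl⟩
  exact ⟨⟨⟨l.length, Nat.lt_succ_of_le hl⟩, l.get⟩, by simp⟩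

/-- A "trigger": a palindrome not in `S` that is a prefix of the (reversed) window `w`. -/
def Trigger (S : Finset (List α)) (w : List α) : Prop :=
  ∃ t, IsPal t ∧ t ∉ S ∧ t <+: w

/-- `x` contains a short palindromic factor not in `S`. -/
def Bad (S : Finset (List α)) (m : ℕ) (x : List α) : Prop :=
  ∃ t, IsPal t ∧ t.length ≤ m ∧ t ∉ S ∧ IsFactor t x

theorem IsFactor.trans {y z x : List α} (h1 : IsFactor y z) (h2 : IsFactor z x) :
    IsFactor y x := by
  obtain ⟨u1, v1, rfl⟩ := h1
  obtain ⟨u2, v2, rfl⟩ := h2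
  exact ⟨u2 ++ u1, v1 ++ v2, by simp⟩

theorem isFactor_of_suffix {t x : List α} (h : t <:+ x) : IsFactor t x := by
  obtain ⟨u, rfl⟩ := h
  exact ⟨u, [], by simp⟩

theorem pal_suffix_iff {t z : List α} (hp : IsPal t) (k : ℕ) :
    (t <:+ z ∧ t.length ≤ k) ↔ t <+: z.reverse.take k := by
  rw [List.prefix_take_iff]
  constructor
  · rintro ⟨h, hk⟩
    refine ⟨?_, hk⟩
    rw [← hp]
    exact (List.reverse_prefix).mpr h
  · rintro ⟨h, hk⟩
    refine ⟨?_, hk⟩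
    rw [← hp] at h
    have := (List.reverse_prefix (l₁ := t) (l₂ := z.reverse.reverse)).mp (by simpa using h)
    simpa using this

theorem isFactor_append_singleton {t x : List α} {a : α} :
    IsFactor t (x ++ [a]) ↔ IsFactor t x ∨ t <:+ (x ++ [a]) := by
  constructor
  · rintro ⟨u, v, h⟩
    rcases List.eq_nil_or_concat v with rfl | ⟨v', b, rfl⟩
    · right
      exact ⟨u, by simpa using h.symm⟩
    · left
      have h' : x ++ [a] = (u ++ t ++ v') ++ [b] := by simpa [List.append_assoc] using h
      obtain ⟨hx, -⟩ := List.append_inj' h' rfl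
      exact ⟨u, v', hx⟩
  · rintro (⟨u, v, rfl⟩ | h)
    · exact ⟨u, v ++ [a], by simp⟩
    · exact isFactor_of_suffix h

theorem bad_append {S : Finset (List α)} {ℓ : ℕ} {x : List α} {a : α} :
    Bad S (ℓ + 2) (x ++ [a]) ↔
      Bad S (ℓ + 2) x ∨ Trigger S (a :: x.reverse.take (ℓ + 1)) := by
  have hw : (x ++ [a]).reverse.take (ℓ + 2) = a :: x.reverse.take (ℓ + 1) := by
    simp
  constructor
  · rintro ⟨t, hp, hlen, hS, hf⟩
    rcases isFactor_append_singleton.mp hf with h | h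
    · exact Or.inl ⟨t, hp, hlen, hS, h⟩
    · right
      refine ⟨t, hp, hS, ?_⟩
      rw [← hw]
      exact (pal_suffix_iff hp _).mp ⟨h, hlen⟩
  · rintro (⟨t, hp, hlen, hS, hf⟩ | ⟨t, hp, hS, hpre⟩)
    · exact ⟨t, hp, hlen, hS, hf.trans ⟨[], [a], by simp⟩⟩
    · rw [← hw] at hpre
      obtain ⟨hsuf, hlen⟩ := (pal_suffix_iff hp _).mpr hpre
      exact ⟨t, hp, hlen, hS, isFactor_of_suffix hsuf⟩

open Classical in
/-- The DFA recognizing words with no short forbidden palindromic factor. -/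
noncomputable def palDFA (S : Finset (List α)) (ℓ : ℕ) :
    DFA α (Option {l : List α // l.length ≤ ℓ + 1}) where
  step q a := match q with
    | none => none
    | some s => if Trigger S (a :: s.1) then none
        else some ⟨(a :: s.1).take (ℓ + 1), by simp⟩
  start := if Trigger S [] then none else some ⟨[], by simp⟩
  accept := {q | q ≠ none}

open Classical in
theorem palDFA_eval (S : Finset (List α)) (ℓ : ℕ) (x : List α) :
    (palDFA S ℓ).eval x =
      if Bad S (ℓ + 2) x then none else some ⟨x.reverse.take (ℓ + 1), by simp⟩ := by
  induction x using List.reverseRecOn with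
  | nil =>
    have hiff : Bad S (ℓ + 2) ([] : List α) ↔ Trigger S ([] : List α) := by
      constructor
      · rintro ⟨t, hp, _, hS, u, v, h⟩
        have ht : t = [] := by
          have h2 := h.symm
          simp only [List.append_eq_nil_iff] at h2
          exact h2.1.2
        exact ⟨t, hp, hS, by simp [ht]⟩
      · rintro ⟨t, hp, hS, hpre⟩
        have ht : t = [] := List.prefix_nil.mp hpre
        exact ⟨t, hp, by simp [ht], hS, [], [], by simp [ht]⟩
    show (palDFA S ℓ).start = _
    rw [palDFA]
    by_cases h : Trigger S ([] : List α)
    · rw [if_pos h, if_pos (hiff.mpr h)]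
    · rw [if_neg h, if_neg (fun hb => h (hiff.mp hb))]
      rfl
  | append_singleton x a ih =>
    rw [DFA.eval_append_singleton, ih]
    by_cases hx : Bad S (ℓ + 2) x
    · have : Bad S (ℓ + 2) (x ++ [a]) := bad_append.mpr (Or.inl hx)
      simp only [hx, if_pos, if_true, this]
      rfl
    · simp only [hx, if_false, if_neg, not_false_iff]
      show (if Trigger S (a :: x.reverse.take (ℓ + 1)) then none else _) = _
      by_cases ht : Trigger S (a :: x.reverse.take (ℓ + 1))
      · have : Bad S (ℓ + 2) (x ++ [a]) := bad_append.mpr (Or.inr ht)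
        simp [ht, this]
      · have hnb : ¬ Bad S (ℓ + 2) (x ++ [a]) := by
          intro hb
          rcases bad_append.mp hb with h | h
          · exact hx h
          · exact ht h
        rw [if_neg ht, if_neg hnb]
        congr 1
        apply Subtype.ext
        simp [List.take_take]

theorem palDFA_accepts (S : Finset (List α)) (ℓ : ℕ) :
    (palDFA S ℓ).accepts = {x | ¬ Bad S (ℓ + 2) x} := by
  classical
  ext x
  rw [DFA.mem_accepts]
  show (palDFA S ℓ).eval x ≠ none ↔ _
  rw [palDFA_eval]
  by_cases h : Bad S (ℓ + 2) x
  · rw [if_pos h]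
    exact ⟨fun hne => absurd rfl hne, fun hx => absurd h hx⟩
  · rw [if_neg h]
    exact ⟨fun _ => h, fun _ => by simp⟩

/-- A palindrome of length at least 2 decomposes as `a :: u ++ [a]` with `u` a palindrome. -/
theorem pal_decomp {y : List α} (hp : IsPal y) (h2 : 2 ≤ y.length) :
    ∃ a u, y = a :: (u ++ [a]) ∧ IsPal u := by
  rcases y with _ | ⟨a, w⟩
  · simp at h2
  rcases List.eq_nil_or_concat w with rfl | ⟨u, b, rfl⟩
  · simp at h2
  have hp' := hp
  unfold IsPal at hp'
  rw [List.concat_eq_append] at hp'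
  simp at hp'
  obtain ⟨rfl, h2⟩ := hp'
  have hu : u.reverse = u := h2.1
  exact ⟨b, u, by simp [List.concat_eq_append], hu⟩

theorem cLang_eq_not_bad {α : Type*} (S : Finset (List α)) (ℓ : ℕ)
    (hℓ : ∀ s ∈ S, s.length ≤ ℓ) :
    (CLang S : Set (List α)) = {x | ¬ Bad S (ℓ + 2) x} := by
  ext x
  constructor
  · intro hx hb
    obtain ⟨t, hp, _, hS, hf⟩ := hb
    exact hS (hx t hf hp)
  · intro hb
    intro y hf hp
    have key : ∀ n, ∀ y : List α, y.length = n → IsFactor y x → IsPal y → y ∈ S := by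
      intro n
      induction n using Nat.strong_induction_on with
      | _ n ih =>
        intro y hlen hf hp
        by_contra hyS
        rcases le_or_gt y.length (ℓ + 2) with h | h
        · exact hb ⟨y, hp, h, hyS, hf⟩
        · obtain ⟨a, u, rfl, hu⟩ := pal_decomp hp (by omega)
          have hul : u.length + 2 = n := by simpa using hlen
          have hfu : IsFactor u x :=
            IsFactor.trans ⟨[a], [a], by simp⟩ hf
          have huS : u ∈ S := ih u.length (by omega) u rfl hfu hu
          have := hℓ u huS
          simp at hlen h
          omega
    exact key y.length y rfl hf hp

end Aux

/-- For a finite set `S` of palindromes over a finite alphabet, with `ℓ` bounding the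
lengths of words of `S`, the language `C_Σ(S)` equals the complement of the union over
palindromes `t ∉ S` of length `≤ ℓ+2` of `Σ* t Σ*`, and `C_Σ(S)` is regular. -/
theorem CLang_eq_compl_union_and_regular {α : Type*} [Fintype α] [DecidableEq α]
    (S : Finset (List α)) (hS : ∀ s ∈ S, IsPal s) (ℓ : ℕ)
    (hℓ : ∀ s ∈ S, s.length ≤ ℓ) :
    (CLang S : Set (List α)) =
      (⋃ t ∈ {t : List α | IsPal t ∧ t.length ≤ ℓ + 2 ∧ t ∉ S},
        {x : List α | ∃ u v, x = u ++ t ++ v})ᶜ ∧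
    Language.IsRegular (CLang S) := by
  have heq := cLang_eq_not_bad S ℓ hℓ
  have hunion : (⋃ t ∈ {t : List α | IsPal t ∧ t.length ≤ ℓ + 2 ∧ t ∉ S},
      {x : List α | ∃ u v, x = u ++ t ++ v}) = {x | Bad S (ℓ + 2) x} := by
    ext x
    simp only [Set.mem_iUnion, Set.mem_setOf_eq]
    constructor
    · rintro ⟨t, ⟨hp, hlen, htS⟩, u, v, h⟩
      exact ⟨t, hp, hlen, htS, u, v, h⟩
    · rintro ⟨t, hp, hlen, htS, u, v, h⟩
      exact ⟨t, ⟨hp, hlen, htS⟩, u, v, h⟩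
  constructor
  · rw [hunion, heq]
    rfl
  · classical
    let M := palDFA S ℓ
    let e := Fintype.equivFin (Option {l : List α // l.length ≤ ℓ + 1})
    refine ⟨Fin (Fintype.card (Option {l : List α // l.length ≤ ℓ + 1})), inferInstance,
      DFA.reindex e M, ?_⟩
    rw [DFA.accepts_reindex]
    show M.accepts = CLang S
    rw [palDFA_accepts]
    have : (CLang S : Set (List α)) = ({x | ¬ Bad S (ℓ + 2) x} : Set (List α)) := heq
    exact congrArg (fun s : Set (List α) => (s : Language α)) this.symm
end

section
/- For any finite alphabet Σ and any ℓ ≥ 0, the language D_ℓ(Σ) of finite words over Σ containing at most ℓ distinct palindromic factors (including the empty word) is regular. -/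
def PalFac {α : Type*} (x : List α) : Set (List α) := {y | IsFactor y x ∧ IsPal y}

section Aux

variable {α : Type*}

lemma mem_palFac_iff {y x : List α} : y ∈ PalFac x ↔ y <:+: x ∧ IsPal y := by
  constructor
  · rintro ⟨⟨u, v, h⟩, hpal⟩; exact ⟨⟨u, v, h.symm⟩, hpal⟩
  · rintro ⟨⟨u, v, h⟩, hpal⟩; exact ⟨⟨u, v, h.symm⟩, hpal⟩

lemma palFac_finite (x : List α) : (PalFac x).Finite := by
  apply Set.Finite.subset x.sublists.finite_toSet
  intro y hy
  rw [mem_palFac_iff] at hy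
  simpa [List.mem_sublists] using hy.1.sublist

lemma palFac_mono {x w : List α} (h : x <:+: w) : PalFac x ⊆ PalFac w := by
  intro y hy
  rw [mem_palFac_iff] at hy ⊢
  exact ⟨hy.1.trans h, hy.2⟩

lemma ncard_palFac_mono_append (x z : List α) :
    (PalFac x).ncard ≤ (PalFac (x ++ z)).ncard :=
  Set.ncard_le_ncard (palFac_mono ⟨[], z, by simp⟩) (palFac_finite _)

lemma tail_dropLast_comm (p : List α) : p.dropLast.tail = p.tail.dropLast := by
  rw [← List.drop_one, ← List.drop_one, List.dropLast_eq_take, List.dropLast_eq_take,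
    List.drop_take, List.length_drop]

lemma pal_strip {p : List α} (hp : IsPal p) (h2 : 2 ≤ p.length) :
    ∃ q, IsPal q ∧ q <:+: p ∧ q.length + 2 = p.length := by
  refine ⟨p.tail.dropLast, ?_, ?_, ?_⟩
  · have h1 : p.tail.reverse = p.dropLast := by
      have := List.tail_reverse (l := p)
      rw [hp] at this
      rw [this, List.reverse_reverse]
    calc p.tail.dropLast.reverse = p.tail.reverse.tail :=
          (List.tail_reverse (l := p.tail)).symm
      _ = p.dropLast.tail := by rw [h1]
      _ = p.tail.dropLast := tail_dropLast_comm p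
  · exact List.infix_iff_prefix_suffix.mpr ⟨p.tail, List.dropLast_prefix _, List.tail_suffix _⟩
  · simp only [List.length_dropLast, List.length_tail]
    omega

lemma pal_chain {p w : List α} (hp : IsPal p) (hw : p <:+: w) :
    ∀ i, 2 * i ≤ p.length → ∃ q, IsPal q ∧ q <:+: w ∧ q.length + 2 * i = p.length := by
  intro i
  induction i with
  | zero => exact fun _ => ⟨p, hp, hw, by omega⟩
  | succ n ih =>
    intro hle
    obtain ⟨q, hq1, hq2, hq3⟩ := ih (by omega)
    obtain ⟨r, hr1, hr2, hr3⟩ := pal_strip hq1 (by omega)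
    exact ⟨r, hr1, hr2.trans hq2, by omega⟩

lemma lt_ncard_of_long_pal {w p : List α} {n : ℕ} (hp : IsPal p) (hw : p <:+: w)
    (hlen : 2 * n < p.length) : n < (PalFac w).ncard := by
  have hch : ∀ i : Fin (n + 1), ∃ q, IsPal q ∧ q <:+: w ∧ q.length + 2 * (i : ℕ) = p.length :=
    fun i => pal_chain hp hw i (by omega)
  choose q hq1 hq2 hq3 using hch
  have hinj : Function.Injective q := by
    intro i j hij
    have h1 := hq3 i
    have h2 := hq3 j
    rw [hij] at h1
    ext
    omega
  have hsub : Set.range q ⊆ PalFac w := by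
    rintro _ ⟨i, rfl⟩
    exact mem_palFac_iff.mpr ⟨hq2 i, hq1 i⟩
  have hcard : (Set.range q).ncard = n + 1 := by
    rw [← Set.image_univ, Set.ncard_image_of_injective _ hinj, Set.ncard_univ,
      Nat.card_eq_fintype_card]
    simp
  have := Set.ncard_le_ncard hsub (palFac_finite w)
  omega

lemma infix_split {p x z : List α} (h : p <:+: x ++ z) :
    p <:+: x ∨ p <:+: z ∨ ∃ s t, p = s ++ t ∧ s <:+ x ∧ t <+: z := by
  obtain ⟨u, v, huv⟩ := h
  rcases le_or_gt x.length u.length with hle | hlt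
  · right; left
    have h := congrArg (List.drop x.length) huv
    have e1 : x.length - u.length = 0 := by omega
    have e2 : x.length - (u.length + p.length) = 0 := by omega
    simp only [List.drop_append, List.length_append, e1, e2, Nat.sub_self,
      List.drop_zero, List.drop_length, List.nil_append] at h
    exact ⟨_, _, h⟩
  · rcases le_or_gt (u.length + p.length) x.length with hle2 | hlt2
    · left
      have h := congrArg (List.take x.length) huv
      simp only [List.take_append, List.length_append, Nat.sub_self,
        List.take_length, List.take_zero, List.append_nil] at h
      rw [List.take_of_length_le (show u.length ≤ x.length by omega),
        List.take_of_length_le (show p.length ≤ x.length - u.length by omega)] at h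
      exact ⟨_, _, h⟩
    · right; right
      refine ⟨p.take (x.length - u.length), p.drop (x.length - u.length),
        (List.take_append_drop _ _).symm, ?_, ?_⟩
      · have h := congrArg (List.take x.length) huv
        have e2 : x.length - (u.length + p.length) = 0 := by omega
        simp only [List.take_append, List.length_append, Nat.sub_self,
          List.take_length, List.take_zero, List.append_nil, e2] at h
        rw [List.take_of_length_le (show u.length ≤ x.length by omega)] at h
        exact ⟨u, h⟩
      · have h := congrArg (List.drop x.length) huv
        have e2 : x.length - (u.length + p.length) = 0 := by omega
        have e3 : List.drop x.length u = [] := by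
          rw [List.drop_eq_nil_iff]; omega
        simp only [List.drop_append, List.length_append, e2, e3, Nat.sub_self,
          List.drop_zero, List.drop_length, List.nil_append] at h
        exact ⟨v, h⟩

lemma suffix_of_take_eq {x y s : List α} {K : ℕ} (h : x.reverse.take K = y.reverse.take K)
    (hs : s <:+ x) (hl : s.length ≤ K) : s <:+ y := by
  rw [← List.reverse_prefix] at hs ⊢
  have h1 : s.reverse <+: x.reverse.take K :=
    List.prefix_take_iff.mpr ⟨hs, by simpa using hl⟩
  rw [h] at h1
  exact h1.trans (List.take_prefix _ _)

lemma crossing {K : ℕ} {x y z p : List α} (hP : PalFac x = PalFac y)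
    (hsuf : x.reverse.take K = y.reverse.take K) (hp : IsPal p)
    (hinf : p <:+: y ++ z) (hlen : p.length ≤ K) : p <:+: x ++ z := by
  rcases infix_split hinf with h | h | ⟨s, t, rfl, hs, ht⟩
  · have hmem : p ∈ PalFac y := mem_palFac_iff.mpr ⟨h, hp⟩
    rw [← hP] at hmem
    exact (mem_palFac_iff.mp hmem).1.trans ⟨[], z, by simp⟩
  · exact h.trans ⟨x, [], by simp⟩
  · have hs' : s <:+ x := suffix_of_take_eq hsuf.symm hs
      (le_trans (by simp) hlen)
    obtain ⟨u, hu⟩ := hs'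
    obtain ⟨v, hv⟩ := ht
    exact ⟨u, v, by rw [← hu, ← hv]; simp⟩

lemma palFac_subset_of_agree {ℓ : ℕ} {x y z : List α}
    (hP : PalFac x = PalFac y)
    (hsuf : x.reverse.take (2 * ℓ + 2) = y.reverse.take (2 * ℓ + 2))
    (hx : (PalFac (x ++ z)).ncard ≤ ℓ) :
    PalFac (y ++ z) ⊆ PalFac (x ++ z) := by
  intro p hpmem
  obtain ⟨hinf, hp⟩ := mem_palFac_iff.mp hpmem
  rcases le_or_gt p.length (2 * ℓ + 2) with hlen | hlen
  · exact mem_palFac_iff.mpr ⟨crossing hP hsuf hp hinf hlen, hp⟩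
  · exfalso
    obtain ⟨q, hq1, hq2, hq3⟩ :=
      pal_chain hp hinf ((p.length - (2 * ℓ + 1)) / 2) (by omega)
    have hqx : q <:+: x ++ z := crossing hP hsuf hq1 hq2 (by omega)
    exact absurd hx (not_le.mpr (lt_ncard_of_long_pal hq1 hqx (by omega)))

theorem isRegular_of_finite_range {τ : Type*} (L : Language α) (g : List α → τ)
    (hfin : (Set.range g).Finite)
    (hstep : ∀ x y a, g x = g y → g (x ++ [a]) = g (y ++ [a]))
    (hmem : ∀ x y, g x = g y → (x ∈ L ↔ y ∈ L)) : L.IsRegular := by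
  classical
  haveI := hfin.to_subtype
  haveI : Fintype ↥(Set.range g) := Fintype.ofFinite _
  have pick : ∀ s : ↥(Set.range g), ∃ x, g x = s.1 := fun s => s.2
  choose f hf using pick
  let M : DFA α ↥(Set.range g) :=
    { step := fun s a => ⟨g (f s ++ [a]), Set.mem_range_self _⟩
      start := ⟨g [], Set.mem_range_self _⟩
      accept := {s | f s ∈ L} }
  have key : ∀ x, M.eval x = ⟨g x, Set.mem_range_self _⟩ := by
    intro x
    induction x using List.reverseRecOn with
    | nil => rfl
    | append_singleton w a ih =>
      show M.evalFrom M.start (w ++ [a]) = _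
      rw [DFA.evalFrom_append_singleton]
      show M.step (M.eval w) a = _
      rw [ih]
      exact Subtype.ext (hstep _ _ a (hf ⟨g w, Set.mem_range_self _⟩))
  have hacc : M.accepts = L := by
    ext x
    rw [DFA.mem_accepts]
    show M.eval x ∈ M.accept ↔ _
    rw [key]
    exact hmem _ _ (hf ⟨g x, Set.mem_range_self _⟩)
  exact ⟨Fin (Fintype.card ↥(Set.range g)), inferInstance,
    M.reindex (Fintype.equivFin _), by rw [DFA.accepts_reindex, hacc]⟩

end Aux

/-- The language of words over a finite alphabet containing at most `ℓ` distinct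
palindromic factors (including the empty word) is regular. -/
theorem D_regular {α : Type*} [Fintype α] (ℓ : ℕ) :
    Language.IsRegular ({x : List α | (PalFac x).ncard ≤ ℓ} : Language α) := by
  classical
  refine isRegular_of_finite_range _
    (fun x => if (PalFac x).ncard ≤ ℓ then some (PalFac x, x.reverse.take (2 * ℓ + 2))
      else none) ?_ ?_ ?_
  · -- finite range
    apply Set.Finite.subset (Set.Finite.insert none
      ((((List.finite_length_le α (2 * ℓ + 2)).finite_subsets).prod
        (List.finite_length_le α (2 * ℓ + 2))).image some))
    rintro _ ⟨x, rfl⟩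
    dsimp only
    split_ifs with h
    · refine Set.mem_insert_of_mem _ ⟨(PalFac x, x.reverse.take (2 * ℓ + 2)), ⟨?_, ?_⟩, rfl⟩
      · intro p hp
        obtain ⟨hinf, hpal⟩ := mem_palFac_iff.mp hp
        show p.length ≤ 2 * ℓ + 2
        by_contra hlong
        exact absurd h (not_le.mpr (lt_ncard_of_long_pal hpal hinf (by omega)))
      · show (x.reverse.take (2 * ℓ + 2)).length ≤ 2 * ℓ + 2
        simp [List.length_take]
    · exact Set.mem_insert _ _
  · -- step compatibility
    intro x y a hgxy
    by_cases hx : (PalFac x).ncard ≤ ℓ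
    · have hy : (PalFac y).ncard ≤ ℓ := by
        by_contra hy
        rw [if_pos hx, if_neg hy] at hgxy
        exact absurd hgxy (by simp)
      rw [if_pos hx, if_pos hy] at hgxy
      have hpair := Option.some.inj hgxy
      have hP : PalFac x = PalFac y := congrArg Prod.fst hpair
      have hsuf : x.reverse.take (2 * ℓ + 2) = y.reverse.take (2 * ℓ + 2) :=
        congrArg Prod.snd hpair
      have hsuf' : (x ++ [a]).reverse.take (2 * ℓ + 2) =
          (y ++ [a]).reverse.take (2 * ℓ + 2) := by
        rw [List.reverse_append, List.reverse_append]
        show List.take (2 * ℓ + 2) (a :: x.reverse) = List.take (2 * ℓ + 2) (a :: y.reverse)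
        rw [show 2 * ℓ + 2 = (2 * ℓ + 1) + 1 from rfl, List.take_succ_cons,
          List.take_succ_cons]
        have h1 : x.reverse.take (2 * ℓ + 1) = (x.reverse.take (2 * ℓ + 2)).take (2 * ℓ + 1) := by
          rw [List.take_take]
          congr 1
          omega
        have h2 : y.reverse.take (2 * ℓ + 1) = (y.reverse.take (2 * ℓ + 2)).take (2 * ℓ + 1) := by
          rw [List.take_take]
          congr 1
          omega
        rw [h1, h2, hsuf]
      by_cases hxa : (PalFac (x ++ [a])).ncard ≤ ℓ
      · have hsub1 : PalFac (y ++ [a]) ⊆ PalFac (x ++ [a]) :=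
          palFac_subset_of_agree hP hsuf hxa
        have hya : (PalFac (y ++ [a])).ncard ≤ ℓ :=
          le_trans (Set.ncard_le_ncard hsub1 (palFac_finite _)) hxa
        have hsub2 : PalFac (x ++ [a]) ⊆ PalFac (y ++ [a]) :=
          palFac_subset_of_agree hP.symm hsuf.symm hya
        rw [if_pos hxa, if_pos hya]
        exact congrArg some (Prod.ext (subset_antisymm hsub2 hsub1) hsuf')
      · have hya : ¬ (PalFac (y ++ [a])).ncard ≤ ℓ := by
          intro hya
          exact hxa (le_trans (Set.ncard_le_ncard
            (palFac_subset_of_agree hP.symm hsuf.symm hya) (palFac_finite _)) hya)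
        rw [if_neg hxa, if_neg hya]
    · have hy : ¬ (PalFac y).ncard ≤ ℓ := by
        by_contra hy
        rw [if_neg hx, if_pos hy] at hgxy
        exact absurd hgxy (by simp)
      have hxa : ¬ (PalFac (x ++ [a])).ncard ≤ ℓ :=
        fun h => hx (le_trans (ncard_palFac_mono_append x [a]) h)
      have hya : ¬ (PalFac (y ++ [a])).ncard ≤ ℓ :=
        fun h => hy (le_trans (ncard_palFac_mono_append y [a]) h)
      rw [if_neg hxa, if_neg hya]
  · -- membership compatibility
    intro x y hgxy
    show (PalFac x).ncard ≤ ℓ ↔ (PalFac y).ncard ≤ ℓ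
    by_cases hx : (PalFac x).ncard ≤ ℓ <;> by_cases hy : (PalFac y).ncard ≤ ℓ <;>
      simp [hx, hy] at hgxy ⊢
end

section
/- The infinite periodic binary word (001011)^ω contains exactly 9 distinct palindromic factors (including the empty word), namely the palindromic factors appearing in some (equivalently, every sufficiently long) finite prefix. -/
def InfFactor {α : Type*} (u : List α) (x : ℕ → α) : Prop :=
  ∃ i, u = (List.range u.length).map (fun j => x (i + j))

/-- The periodic infinite binary word `(001011)^ω`. -/
def xword : ℕ → Fin 2 := fun n => ![0, 0, 1, 0, 1, 1] ⟨n % 6, Nat.mod_lt _ (by norm_num)⟩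

def pat (k : ZMod 6) : Fin 2 := xword k.val

lemma xword_eq (n : ℕ) : xword n = pat (n : ZMod 6) := by
  unfold pat xword
  rw [ZMod.val_natCast]
  congr 1
  simp [Fin.ext_iff, Fin.val_natCast, Nat.mod_mod_of_dvd]

def Spal : Finset (List (Fin 2)) :=
  {[], [0], [1], [0,0], [1,1], [0,1,0], [1,0,1], [0,1,1,0], [1,0,0,1]}

lemma pal_get {α : Type*} {u : List α} (h : u.reverse = u) {k : ℕ} (hk : k < u.length) :
    u[k]'hk = u[u.length - 1 - k]'(by omega) := by
  have h2 : u.reverse[k]'(by simpa using hk) = u[u.length - 1 - k]'(by omega) :=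
    List.getElem_reverse _
  rw [← h2]
  simp [h]

lemma L1 : ∀ a : ZMod 6, ∀ n : Fin 5,
    ∀ v : List (Fin 2), v = (List.range n.val).map (fun j : ℕ => pat (a + (j : ZMod 6))) →
    v.reverse = v → v ∈ Spal := by
  intro a n v hv
  subst hv
  revert a n
  decide

lemma L2 : ∀ a b : ZMod 6, ∃ j : Fin 5,
    pat (a + ((j : ℕ) : ZMod 6)) ≠ pat (b - ((j : ℕ) : ZMod 6)) := by decide

/-- `(001011)^ω` has exactly 9 distinct palindromic factors (including the empty word). -/
theorem periodic_word_nine_palindromes :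
    {u : List (Fin 2) | InfFactor u xword ∧ IsPal u}.ncard = 9 := by
  have hset : {u : List (Fin 2) | InfFactor u xword ∧ IsPal u} = ↑Spal := by
    ext u
    simp only [Set.mem_setOf_eq, Finset.mem_coe]
    constructor
    · rintro ⟨⟨i, hu⟩, hpal⟩
      unfold IsPal at hpal
      by_cases hle : u.length ≤ 4
      · have hu' : u = (List.range u.length).map
            (fun j : ℕ => pat ((i : ZMod 6) + (j : ZMod 6))) := by
          conv_lhs => rw [hu]
          apply List.map_congr_left
          intro j hj
          rw [xword_eq, Nat.cast_add]
        exact L1 (i : ZMod 6) ⟨u.length, by omega⟩ u hu' hpal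
      · exfalso
        have h5 : 5 ≤ u.length := by omega
        obtain ⟨j, hj⟩ := L2 (i : ZMod 6) ((i + u.length - 1 : ℕ) : ZMod 6)
        apply hj
        have hjn : (j : ℕ) < u.length := by have := j.isLt; omega
        have hget : ∀ k (hk : k < u.length), u[k]'hk = xword (i + k) := by
          intro k hk
          rw [List.getElem_of_eq hu (by simpa using hk)]
          simp
        have hpget := pal_get hpal hjn
        rw [hget _ hjn, hget _ (by omega)] at hpget
        have harith : i + (u.length - 1 - (j:ℕ)) = i + u.length - 1 - (j:ℕ) := by omega
        rw [harith] at hpget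
        calc pat ((i:ZMod 6) + ((j:ℕ) : ZMod 6)) = xword (i + (j:ℕ)) := by
              rw [xword_eq, Nat.cast_add]
          _ = xword (i + u.length - 1 - (j:ℕ)) := hpget
          _ = pat (((i + u.length - 1 : ℕ) : ZMod 6) - ((j:ℕ) : ZMod 6)) := by
              rw [xword_eq, Nat.cast_sub (by omega)]
    · intro hu
      fin_cases hu
      · exact ⟨⟨0, by decide⟩, rfl⟩
      · exact ⟨⟨0, by decide⟩, rfl⟩
      · exact ⟨⟨2, by decide⟩, rfl⟩
      · exact ⟨⟨0, by decide⟩, rfl⟩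
      · exact ⟨⟨4, by decide⟩, rfl⟩
      · exact ⟨⟨1, by decide⟩, rfl⟩
      · exact ⟨⟨2, by decide⟩, rfl⟩
      · exact ⟨⟨3, by decide⟩, rfl⟩
      · exact ⟨⟨5, by decide⟩, rfl⟩
  rw [hset, Set.ncard_coe_finset]
  decide
end

section
/- Define G₀ = 001101000110 and G_{n+1} = G_n · 01 · G_n^R. Then for every n, G_n is a prefix of G_{n+1}, so the limit word G_∞ exists; moreover G_∞ is aperiodic (not ultimately periodic). -/
/-- `G 0 = 001101000110`, `G (n+1) = G n ++ 01 ++ (G n)^R`. -/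
def G : ℕ → List (Fin 2)
  | 0 => [0, 0, 1, 1, 0, 1, 0, 0, 0, 1, 1, 0]
  | n + 1 => G n ++ [0, 1] ++ (G n).reverse

lemma G_succ (n : ℕ) : G (n+1) = G n ++ ([0,1] ++ (G n).reverse) := by simp [G]

lemma L_succ (n : ℕ) : (G (n+1)).length = 2 * (G n).length + 2 := by
  simp [G_succ]; omega

lemma le_L (n : ℕ) : n + 1 ≤ (G n).length := by
  induction n with
  | zero => simp [G]
  | succ n ih => rw [L_succ]; omega

section
variable {x : ℕ → Fin 2} (hx : ∀ n, (List.range (G n).length).map x = G n)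

include hx

lemma x_eq (n i : ℕ) (hi : i < (G n).length) : (G n)[i]? = some (x i) := by
  conv_lhs => rw [← hx n]
  simp [hi]

lemma sep0 (n : ℕ) : x (G n).length = 0 := by
  have h1 : (G n).length < (G (n+1)).length := by rw [L_succ]; omega
  have e := x_eq hx (n+1) _ h1
  rw [G_succ, List.getElem?_append_right (le_refl _)] at e
  simp at e
  exact e.symm

lemma sep1 (n : ℕ) : x ((G n).length + 1) = 1 := by
  have h1 : (G n).length + 1 < (G (n+1)).length := by rw [L_succ]; omega
  have e := x_eq hx (n+1) _ h1
  rw [G_succ, List.getElem?_append_right (by omega)] at e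
  simp at e
  exact e.symm

lemma mirror (n j : ℕ) (hj : j < (G n).length) :
    x ((G n).length + 2 + j) = x ((G n).length - 1 - j) := by
  have hL : 1 ≤ (G n).length := le_trans (by omega) (le_L n)
  have h1 : (G n).length + 2 + j < (G (n+1)).length := by rw [L_succ]; omega
  have e := x_eq hx (n+1) _ h1
  have e2 := x_eq hx n ((G n).length - 1 - j) (by omega)
  rw [G_succ, List.getElem?_append_right (by omega)] at e
  have i1 : (G n).length + 2 + j - (G n).length = 2 + j := by omega
  rw [i1] at e
  rw [List.getElem?_append_right (by simp)] at e
  rw [show 2 + j - ([0,1] : List (Fin 2)).length = j from by simp] at e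
  rw [List.getElem?_reverse hj] at e
  rw [e2] at e
  exact (Option.some_injective _ e).symm

/-- partial period `2L+4`, from the two mirror symmetries -/
lemma partialper (n m : ℕ) (hm : m < (G n).length) :
    x (m + (2 * (G n).length + 4)) = x m := by
  have hL : 1 ≤ (G n).length := le_trans (by omega) (le_L n)
  have e1 := mirror hx n ((G n).length - 1 - m) (by omega)
  have i1 : (G n).length + 2 + ((G n).length - 1 - m) = 2 * (G n).length + 1 - m := by omega
  have i2 : (G n).length - 1 - ((G n).length - 1 - m) = m := by omega
  rw [i1, i2] at e1
  have e2 := mirror hx (n+1) m (by rw [L_succ]; omega)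
  rw [L_succ] at e2
  have i3 : 2 * (G n).length + 2 + 2 + m = m + (2 * (G n).length + 4) := by omega
  have i4 : 2 * (G n).length + 2 - 1 - m = 2 * (G n).length + 1 - m := by omega
  rw [i3, i4] at e2
  rw [e2, e1]

end

/-- Each `G n` is a prefix of `G (n+1)`, so the limit word `G_∞` exists; moreover any
infinite word having every `G n` as a prefix is aperiodic (not ultimately periodic). -/
theorem G_prefix_and_aperiodic :
    (∀ n, G n <+: G (n + 1)) ∧
    (∀ x : ℕ → Fin 2,
      (∀ n, (List.range (G n).length).map x = G n) →
      ¬ ∃ p, 1 ≤ p ∧ ∃ N, ∀ m, N ≤ m → x (m + p) = x m) := by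
  constructor
  · intro n
    exact ⟨[0,1] ++ (G n).reverse, (G_succ n).symm⟩
  rintro x hx ⟨p, hp, N, hper⟩
  -- Step 1: x is purely periodic with period p
  have pure : ∀ m, x (m + p) = x m := by
    intro m
    have hL : N + m + p + 1 ≤ (G (N + m + p)).length := le_L _
    set L := (G (N + m + p)).length with hLdef
    have e1 := mirror hx (N + m + p) (L - 1 - (m + p)) (by omega)
    have i1 : L - 1 - (L - 1 - (m + p)) = m + p := by omega
    rw [i1] at e1
    have e2 := mirror hx (N + m + p) (L - 1 - m) (by omega)
    have i2 : L - 1 - (L - 1 - m) = m := by omega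
    rw [i2] at e2
    have e3 := hper (L + 2 + (L - 1 - (m + p))) (by omega)
    have i3 : L + 2 + (L - 1 - (m + p)) + p = L + 2 + (L - 1 - m) := by omega
    rw [i3] at e3
    rw [← e1, ← e3, e2]
  -- shifts by multiples of p
  have mul_per : ∀ k r, x (r + k * p) = x r := by
    intro k
    induction k with
    | zero => simp
    | succ k ih =>
      intro r
      have h : r + (k + 1) * p = (r + k * p) + p := by ring
      rw [h, pure, ih]
  -- final contradiction at level n = p
  have hpL : p + 1 ≤ (G p).length := le_L p
  set L := (G p).length with hLdef
  set r := L % p with hr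
  have hrp : r < p := Nat.mod_lt _ (by omega)
  have h5 : r + L / p * p = L := Nat.mod_add_div' L p
  have h0 : x L = 0 := sep0 hx p
  have h1 : x (3 * L + 4) = 1 := by
    have e := mirror hx (p + 1) L (by rw [L_succ]; omega)
    rw [L_succ] at e
    have i1 : 2 * L + 2 + 2 + L = 3 * L + 4 := by omega
    have i2 : 2 * L + 2 - 1 - L = L + 1 := by omega
    rw [i1, i2] at e
    rw [e]
    exact sep1 hx p
  have hA : x L = x r := by
    conv_lhs => rw [← h5]
    exact mul_per (L / p) r
  have hB : x (L + (2 * L + 4)) = x (r + (2 * L + 4)) := by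
    have h6 : L + (2 * L + 4) = (r + (2 * L + 4)) + L / p * p := by omega
    rw [h6]
    exact mul_per _ _
  have e5 : x (r + (2 * L + 4)) = x r := partialper hx p r (by omega)
  have contra : (0 : Fin 2) = 1 := by
    rw [← h0, hA, ← e5, ← hB, show L + (2 * L + 4) = 3 * L + 4 from by omega, h1]
  exact absurd contra (by decide)
end

section
/- Define G₀ = 001101000110 and G_{n+1} = G_n · 01 · G_n^R. The infinite word G_∞ = lim G_n is uniformly recurrent: for every factor u of G_∞ there exists N such that every factor of G_∞ of length N contains u as a factor. -/
namespace GUR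

def seg {α : Type*} (x : ℕ → α) (i l : ℕ) : List α := (List.range l).map fun j => x (i + j)

@[simp] lemma seg_length {α : Type*} (x : ℕ → α) (i l : ℕ) : (seg x i l).length = l := by
  simp [seg]

lemma seg_append {α : Type*} (x : ℕ → α) (i a b : ℕ) :
    seg x i a ++ seg x (i + a) b = seg x i (a + b) := by
  simp [seg, List.range_add, List.map_map, Function.comp_def, Nat.add_assoc]

lemma seg_take {α : Type*} (x : ℕ → α) (i l g : ℕ) (h : g ≤ l) :
    (seg x i l).take g = seg x i g := by
  simp [seg, ← List.map_take, List.take_range, Nat.min_eq_left h]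

lemma seg_eq_lseg {α : Type*} (x : ℕ → α) (w : List α)
    (h : (List.range w.length).map x = w) (p l : ℕ) (hpl : p + l ≤ w.length) :
    seg x p l = (w.drop p).take l := by
  apply List.ext_getElem
  · simp [seg]; omega
  · intro j h1 h2
    have hj : j < l := by simpa using h1
    have hpj : p + j < w.length := by omega
    simp only [seg, List.getElem_map, List.getElem_range]
    rw [List.getElem_take, List.getElem_drop, List.getElem_of_eq h.symm hpj]
    simp

lemma lseg_reverse {α : Type*} (w : List α) (q d l : ℕ) (h : d + q + l = w.length) :
    (w.reverse.drop q).take l = ((w.drop d).take l).reverse := by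
  apply List.ext_getElem
  · simp; omega
  · intro j h1 h2
    have hj : j < l := by simp at h1; omega
    rw [List.getElem_take, List.getElem_drop, List.getElem_reverse, List.getElem_reverse]
    rw [List.getElem_take, List.getElem_drop]
    congr 1
    simp at h2 ⊢
    omega

lemma lseg_prefix {α : Type*} (W s : List α) (p l : ℕ) (h : p + l ≤ W.length) :
    ((W ++ s).drop p).take l = (W.drop p).take l := by
  apply List.ext_getElem
  · simp; omega
  · intro j h1 h2
    have hj : j < l := by simp at h1; omega
    rw [List.getElem_take, List.getElem_drop, List.getElem_take, List.getElem_drop,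
      List.getElem_append_left (by omega)]

lemma G_len_succ (n : ℕ) : (G (n + 1)).length = 2 * (G n).length + 2 := by
  simp [G]; ring

lemma G_len_ge (n : ℕ) : n ≤ (G n).length := by
  induction n with
  | zero => simp
  | succ n ih => rw [G_len_succ]; omega

lemma G_len_pow (n m : ℕ) :
    (G (n + 1 + m)).length + 2 = 2 ^ m * ((G (n + 1)).length + 2) := by
  induction m with
  | zero => simp
  | succ m ih =>
    have h1 : n + 1 + (m + 1) = (n + 1 + m) + 1 := rfl
    rw [h1, G_len_succ, pow_succ, Nat.mul_comm (2 ^ m) 2, Nat.mul_assoc, ← ih]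
    omega

lemma G_succ_reverse (n : ℕ) : (G (n + 1)).reverse = G n ++ [1, 0] ++ (G n).reverse := by
  show (G n ++ [0, 1] ++ (G n).reverse).reverse = _
  simp

lemma G_take (n : ℕ) : (G (n + 1)).take (G n).length = G n := by
  show (G n ++ [0, 1] ++ (G n).reverse).take (G n).length = G n
  rw [List.append_assoc, List.take_left]

lemma G_rev_take (n : ℕ) : (G (n + 1)).reverse.take (G n).length = G n := by
  rw [G_succ_reverse, List.append_assoc, List.take_left]

/-- Block lemma: in `G (n+1+m)`, every aligned block of length `L = |G (n+1)|`
at a position multiple of `L+2` equals `G (n+1)` or its reverse. -/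
lemma block (n : ℕ) : ∀ m k : ℕ,
    k * ((G (n + 1)).length + 2) + ((G (n + 1)).length + 2) ≤ (G (n + 1 + m)).length + 2 →
    ((G (n + 1 + m)).drop (k * ((G (n + 1)).length + 2))).take (G (n + 1)).length = G (n + 1) ∨
    ((G (n + 1 + m)).drop (k * ((G (n + 1)).length + 2))).take (G (n + 1)).length
      = (G (n + 1)).reverse := by
  intro m
  set L := (G (n + 1)).length with hL
  induction m with
  | zero =>
    intro k hk
    simp only [Nat.add_zero] at hk ⊢
    rw [← hL] at hk
    have h0 : k * (L + 2) = 0 := by omega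
    left
    rw [h0, List.drop_zero, hL, List.take_length]
  | succ m ih =>
    intro k hk
    have hlen : (G (n + 1 + m)).length + 2 = 2 ^ m * (L + 2) := G_len_pow n m
    set W := G (n + 1 + m) with hW
    set c := 2 ^ m with hc
    have hc1 : 1 ≤ c := Nat.one_le_two_pow
    have hG : G (n + 1 + (m + 1)) = W ++ [0, 1] ++ W.reverse := by
      show G ((n + 1 + m) + 1) = _
      rfl
    have hlen2 : (G (n + 1 + (m + 1))).length + 2 = 2 * c * (L + 2) := by
      have h2 := G_len_pow n (m + 1)
      rw [pow_succ, Nat.mul_comm (2 ^ m) 2] at h2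
      rw [h2, ← hc]
    rw [hlen2] at hk
    rw [hG]
    have e2 : 2 * c * (L + 2) = c * (L + 2) + c * (L + 2) := by ring
    have ekc : (k + 1) * (L + 2) = k * (L + 2) + (L + 2) := by ring
    by_cases hkc : k < c
    · -- block inside W
      have hmul : (k + 1) * (L + 2) ≤ c * (L + 2) := Nat.mul_le_mul_right _ (by omega)
      have hb : k * (L + 2) + L ≤ W.length := by omega
      rw [List.append_assoc, lseg_prefix W _ _ _ hb]
      exact ih k (by omega)
    · -- block inside W.reverse
      push_neg at hkc
      obtain ⟨k', rfl⟩ : ∃ k', k = c + k' := ⟨k - c, by omega⟩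
      have e1 : (c + k') * (L + 2) = c * (L + 2) + k' * (L + 2) := Nat.add_mul _ _ _
      have hk'c : k' < c := by
        by_contra hcon
        push_neg at hcon
        have hm : c * (L + 2) ≤ k' * (L + 2) := Nat.mul_le_mul_right _ hcon
        omega
      obtain ⟨k₀, hk₀⟩ : ∃ k₀, c = k' + k₀ + 1 := ⟨c - k' - 1, by omega⟩
      have e3 : c * (L + 2) = k' * (L + 2) + k₀ * (L + 2) + (L + 2) := by
        rw [hk₀]; ring
      have hdrop : (c + k') * (L + 2) = (W ++ [0, 1]).length + k' * (L + 2) := by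
        have : (W ++ [0, 1]).length = W.length + 2 := by simp
        omega
      rw [hdrop, List.drop_length_add_append]
      rw [lseg_reverse W (k' * (L + 2)) (k₀ * (L + 2)) L (by omega)]
      have hih := ih k₀ (by omega)
      rcases hih with h | h
      · right; rw [h]
      · left; rw [h]; simp

lemma factor_take_drop {α : Type*} (w : List α) (i l : ℕ) :
    IsFactor ((w.drop i).take l) w := by
  refine ⟨w.take i, w.drop (i + l), ?_⟩
  rw [List.append_assoc, ← List.drop_drop, List.take_append_drop, List.take_append_drop]

lemma isFactor_trans {α : Type*} {a b c : List α} (h1 : IsFactor a b) (h2 : IsFactor b c) :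
    IsFactor a c := by
  obtain ⟨u1, v1, rfl⟩ := h1
  obtain ⟨u2, v2, rfl⟩ := h2
  exact ⟨u2 ++ u1, v1 ++ v2, by simp⟩

/-- every aligned position `k*(L+2)` in `x` carries a copy of `G n`. -/
lemma key (x : ℕ → Fin 2) (hx : ∀ n, (List.range (G n).length).map x = G n) (n k : ℕ) :
    seg x (k * ((G (n + 1)).length + 2)) (G n).length = G n := by
  set L := (G (n + 1)).length with hL
  set m := k * (L + 2) + (L + 2) with hm
  have hg : (G n).length ≤ L := by rw [hL, G_len_succ]; omega
  have hmb : k * (L + 2) + (L + 2) ≤ (G (n + 1 + m)).length + 2 := by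
    have h1 : n + 1 + m ≤ (G (n + 1 + m)).length := G_len_ge _
    omega
  have hblock := block n m k hmb
  have hseg : seg x (k * (L + 2)) L = ((G (n + 1 + m)).drop (k * (L + 2))).take L :=
    seg_eq_lseg x _ (hx _) _ _ (by omega)
  have hsplit : seg x (k * (L + 2)) (G n).length = (seg x (k * (L + 2)) L).take (G n).length :=
    (seg_take x _ _ _ hg).symm
  rw [hsplit, hseg]
  rcases hblock with h | h
  · rw [h]; exact G_take n
  · rw [h]; exact G_rev_take n

end GUR

open GUR in
/-- The limit word `G_∞` (the infinite word having every `G n` as a prefix) is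
uniformly recurrent: every factor `u` occurs in every sufficiently long factor. -/
theorem G_uniformly_recurrent (x : ℕ → Fin 2)
    (hx : ∀ n, (List.range (G n).length).map x = G n) :
    ∀ u : List (Fin 2), InfFactor u x →
      ∃ N, ∀ v : List (Fin 2), InfFactor v x → v.length = N → IsFactor u v := by
  rintro u ⟨i, hu⟩
  set n := i + u.length with hn
  have hnle : i + u.length ≤ (G n).length := G_len_ge n
  have hu' : u = ((G n).drop i).take u.length :=
    hu.trans (seg_eq_lseg x (G n) (hx n) i u.length hnle)
  have hfu : IsFactor u (G n) := by
    have := factor_take_drop (G n) i u.length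
    rwa [← hu'] at this
  set L := (G (n + 1)).length with hL
  set g := (G n).length with hg
  have hgL : g ≤ L := by rw [hL, G_len_succ]; omega
  refine ⟨2 * (L + 2), ?_⟩
  rintro v ⟨i', hv⟩ hvN
  set k := i' / (L + 2) + 1 with hk
  have hdm := Nat.div_add_mod i' (L + 2)
  have hmod : i' % (L + 2) < L + 2 := Nat.mod_lt _ (by omega)
  have ek : k * (L + 2) = (L + 2) * (i' / (L + 2)) + (L + 2) := by rw [hk]; ring
  have h1 : i' ≤ k * (L + 2) := by omega
  have h2 : k * (L + 2) ≤ i' + (L + 2) := by omega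
  set a := k * (L + 2) - i' with ha
  set rest := i' + 2 * (L + 2) - (k * (L + 2) + g) with hrest
  have hia : i' + a = k * (L + 2) := by omega
  have hsum : a + (g + rest) = 2 * (L + 2) := by omega
  have hv' : v = seg x i' (2 * (L + 2)) := by
    rw [hv, hvN]; rfl
  have hGn : seg x (i' + a) g = G n := by
    rw [hia]; exact key x hx n k
  have hfv : IsFactor (G n) v := by
    refine ⟨seg x i' a, seg x (i' + a + g) rest, ?_⟩
    rw [hv', ← hsum, ← seg_append, ← seg_append, hGn, List.append_assoc]
  exact isFactor_trans hfu hfv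
end

section
/- Let h : {0,1}* → Σ* be a morphism defined by two noncommuting nonempty words h(0) = x₀ and h(1) = x₁ (i.e., x₀x₁ ≠ x₁x₀). If the infinite binary word w is aperiodic, then the infinite word h(w) is aperiodic. -/
/-- An infinite word is aperiodic if it is not ultimately periodic. -/
def Aperiodic' {α : Type*} (x : ℕ → α) : Prop :=
  ¬ ∃ p, 1 ≤ p ∧ ∃ N, ∀ m, N ≤ m → x (m + p) = x m

namespace ImgAp

variable {S : Type*}

/-- Shift of an infinite word. -/
def shift (α : ℕ → S) (d : ℕ) : ℕ → S := fun n => α (d + n)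

/-- Segment of an infinite word: `l` letters starting at position `k`. -/
def Seg (α : ℕ → S) (k l : ℕ) : List S := (List.range l).map fun i => α (k + i)

lemma seg_length (α : ℕ → S) (k l : ℕ) : (Seg α k l).length = l := by simp [Seg]

lemma seg_shift (α : ℕ → S) (d k l : ℕ) : Seg (shift α d) k l = Seg α (d + k) l := by
  simp [Seg, shift, Nat.add_assoc]

lemma shift_shift (α : ℕ → S) (a b : ℕ) : shift (shift α a) b = shift α (a + b) := by
  funext n; simp [shift, Nat.add_assoc]

lemma seg_split (α : ℕ → S) (k a b : ℕ) :
    Seg α k (a + b) = Seg α k a ++ Seg α (k + a) b := by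
  simp [Seg, List.range_add, Function.comp, Nat.add_assoc]

lemma seg_take (α : ℕ → S) (k : ℕ) {l l' : ℕ} (h : l ≤ l') :
    (Seg α k l').take l = Seg α k l := by
  simp [Seg, ← List.map_take, List.take_range, Nat.min_eq_left h]

/-- Closure property for a set of cut-points of a factorization over `{u,v}`. -/
def Closed (u v : List S) (α : ℕ → S) (P : ℕ → Prop) : Prop :=
  ∀ k, P k → (Seg α k u.length = u ∧ P (k + u.length)) ∨
             (Seg α k v.length = v ∧ P (k + v.length))

/-- `α` is an infinite product of copies of `u` and `v`. -/
def ProdW (u v : List S) (α : ℕ → S) : Prop := ∃ P : ℕ → Prop, P 0 ∧ Closed u v α P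

lemma ProdW.swap {u v : List S} {α : ℕ → S} (h : ProdW u v α) : ProdW v u α := by
  obtain ⟨P, h0, hC⟩ := h
  exact ⟨P, h0, fun k hk => (hC k hk).symm⟩

lemma closed_shift {u v : List S} {α : ℕ → S} {P : ℕ → Prop} (h : Closed u v α P) (d : ℕ) :
    Closed u v (shift α d) (fun k => P (k + d)) := by
  intro k hk
  rcases h (k + d) hk with ⟨hs, hn⟩ | ⟨hs, hn⟩
  · left
    refine ⟨?_, by simpa [Nat.add_right_comm] using hn⟩
    rw [seg_shift, Nat.add_comm d k]; exact hs
  · right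
    refine ⟨?_, by simpa [Nat.add_right_comm] using hn⟩
    rw [seg_shift, Nat.add_comm d k]; exact hs

lemma prod_of_mem {u v : List S} {α : ℕ → S} {P : ℕ → Prop} (h : Closed u v α P) {d : ℕ}
    (hd : P d) : ProdW u v (shift α d) :=
  ⟨fun k => P (k + d), by simpa using hd, closed_shift h d⟩

/-- Refinement: if `v = u ++ t` then any `{u,v}`-factorization refines to a
`{u,t}`-factorization. -/
lemma prod_refine {u v t : List S} {α : ℕ → S} (hv : v = u ++ t)
    (h : ProdW u v α) : ProdW u t α := by
  obtain ⟨P, h0, hC⟩ := h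
  have hlen : v.length = u.length + t.length := by simp [hv]
  refine ⟨fun k => P k ∨ ∃ j, P j ∧ Seg α j v.length = v ∧ k = j + u.length,
    Or.inl h0, ?_⟩
  have splitv : ∀ j, Seg α j v.length = v →
      Seg α j u.length = u ∧ Seg α (j + u.length) t.length = t := by
    intro j hj
    rw [hlen, seg_split] at hj
    exact List.append_inj (hj.trans hv) (seg_length α j u.length)
  intro k hk
  have fromP : ∀ k, P k →
      (Seg α k u.length = u ∧ (P (k + u.length) ∨ ∃ j, P j ∧ Seg α j v.length = v ∧ k + u.length = j + u.length)) ∨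
      (Seg α k t.length = t ∧ (P (k + t.length) ∨ ∃ j, P j ∧ Seg α j v.length = v ∧ k + t.length = j + u.length)) := by
    intro k hk
    rcases hC k hk with ⟨hs, hn⟩ | ⟨hs, hn⟩
    · exact Or.inl ⟨hs, Or.inl hn⟩
    · exact Or.inl ⟨(splitv k hs).1, Or.inr ⟨k, hk, hs, rfl⟩⟩
  rcases hk with hk | ⟨j, hj, hsv, rfl⟩
  · exact fromP k hk
  · rcases hC j hj with ⟨_, hn⟩ | ⟨_, hn⟩
    · exact fromP _ hn
    · refine Or.inr ⟨(splitv j hsv).2, Or.inl ?_⟩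
      have : j + u.length + t.length = j + v.length := by omega
      rwa [this]

/-- Prepending a factor `t` to a `{u,t}`-product. -/
lemma prod_cons {u t : List S} {α : ℕ → S} (hs : Seg α 0 t.length = t)
    (h : ProdW u t (shift α t.length)) : ProdW u t α := by
  obtain ⟨P, h0, hC⟩ := h
  refine ⟨fun k => k = 0 ∨ ∃ j, P j ∧ k = j + t.length, Or.inl rfl, ?_⟩
  intro k hk
  rcases hk with rfl | ⟨j, hj, rfl⟩
  · exact Or.inr ⟨by simpa using hs, Or.inr ⟨0, h0, by omega⟩⟩
  · rcases hC j hj with ⟨hsg, hn⟩ | ⟨hsg, hn⟩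
    · rw [seg_shift, Nat.add_comm t.length j] at hsg
      exact Or.inl ⟨hsg, Or.inr ⟨j + u.length, hn, by omega⟩⟩
    · rw [seg_shift, Nat.add_comm t.length j] at hsg
      exact Or.inr ⟨hsg, Or.inr ⟨j + t.length, hn, by omega⟩⟩

/-- Core of the two-factorization commutation lemma, assuming `|u| ≤ |v|`. -/
lemma main_core (N : ℕ)
    (ih : ∀ (u v : List S) (α : ℕ → S), u.length + v.length ≤ N → u ≠ [] → v ≠ [] →
      Seg α 0 u.length = u → ProdW u v (shift α u.length) →
      Seg α 0 v.length = v → ProdW u v (shift α v.length) → u ++ v = v ++ u)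
    (u v : List S) (α : ℕ → S) (hN : u.length + v.length ≤ N + 1)
    (hle : u.length ≤ v.length) (hu : u ≠ []) (hv : v ≠ [])
    (hsu : Seg α 0 u.length = u) (hpu : ProdW u v (shift α u.length))
    (hsv : Seg α 0 v.length = v) (hpv : ProdW u v (shift α v.length)) :
    u ++ v = v ++ u := by
  have hul : 1 ≤ u.length := List.length_pos_iff.mpr hu
  set t := v.drop u.length with htdef
  have hvut : v = u ++ t := by
    conv_lhs => rw [← List.take_append_drop u.length v]
    rw [← htdef]
    congr 1
    rw [← hsv, seg_take α 0 hle, hsu]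
  by_cases h0 : t = []
  · rw [show u = v by rw [hvut, h0, List.append_nil]]
  · have htl : v.length = u.length + t.length := by simp [hvut]
    set β := shift α u.length with hβ
    have hβseg : ∀ k l, Seg β k l = Seg α (u.length + k) l := fun k l => seg_shift α _ k l
    have hβt : Seg β 0 t.length = t := by
      have := hsv
      rw [htl, seg_split] at this
      have h2 := (List.append_inj (this.trans hvut) (seg_length α 0 u.length)).2
      rw [hβseg]
      simpa using h2
    have hshift2 : shift β t.length = shift α v.length := by
      rw [hβ, shift_shift, ← htl]
    have hpt2 : ProdW u t (shift β t.length) := by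
      rw [hshift2]; exact prod_refine hvut hpv
    obtain ⟨P, hP0, hC⟩ := hpu
    have hput : Seg β 0 u.length = u ∧ ProdW u t (shift β u.length) := by
      rcases hC 0 hP0 with ⟨hs, hn⟩ | ⟨hs, hn⟩
      · exact ⟨hs, prod_refine hvut (by simpa using prod_of_mem hC hn)⟩
      · have hsplit : Seg β 0 u.length = u ∧ Seg β u.length t.length = t := by
          rw [htl, seg_split] at hs
          simpa using List.append_inj (hs.trans hvut) (seg_length β 0 u.length)
        refine ⟨hsplit.1, prod_cons ?_ ?_⟩
        · rw [seg_shift, Nat.add_zero]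
          exact hsplit.2
        · rw [shift_shift, ← htl]
          have : ProdW u v (shift β v.length) := by simpa using prod_of_mem hC hn
          exact prod_refine hvut this
    have hsum : u.length + t.length ≤ N := by omega
    have hcomm_ut : u ++ t = t ++ u := by
      rcases le_or_gt u.length t.length with h' | h'
      · exact ih u t β hsum hu h0 hput.1 hput.2 hβt hpt2
      · exact (ih t u β (by omega) h0 hu hβt hpt2.swap hput.1 hput.2.swap).symm
    rw [hvut, List.append_assoc, ← hcomm_ut]

/-- If an infinite word factors over `{u,v}` starting with `u`, and also starting
with `v`, then `u` and `v` commute. -/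
lemma main : ∀ (N : ℕ) (u v : List S) (α : ℕ → S), u.length + v.length ≤ N →
    u ≠ [] → v ≠ [] →
    Seg α 0 u.length = u → ProdW u v (shift α u.length) →
    Seg α 0 v.length = v → ProdW u v (shift α v.length) → u ++ v = v ++ u := by
  intro N
  induction N with
  | zero =>
    intro u v α hN hu _ _ _ _ _
    have := List.length_pos_iff.mpr hu
    omega
  | succ N ih =>
    intro u v α hN hu hv hsu hpu hsv hpv
    rcases le_or_gt u.length v.length with h | h
    · exact main_core N ih u v α hN h hu hv hsu hpu hsv hpv
    · exact (main_core N (fun u v α h1 h2 h3 h4 h5 h6 h7 =>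
        ih u v α h1 h2 h3 h4 h5 h6 h7) v u α (by omega) (le_of_lt h) hv hu hsv
        hpv.swap hsu hpu.swap).symm

end ImgAp

open ImgAp

/-- If `h(0) = x₀` and `h(1) = x₁` are nonempty noncommuting words and the infinite
binary word `w` is aperiodic, then `h(w)` is aperiodic.  Here `y` is the infinite
word `h(w)`, characterized by having every `h(w(0)) ⋯ h(w(n-1))` as a prefix. -/
theorem image_aperiodic {S : Type*} (x₀ x₁ : List S)
    (h₀ : x₀ ≠ []) (h₁ : x₁ ≠ []) (hcomm : x₀ ++ x₁ ≠ x₁ ++ x₀)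
    (w : ℕ → Fin 2) (hw : Aperiodic' w)
    (y : ℕ → S)
    (hy : ∀ n,
      (List.range ((List.range n).flatMap (fun i => if w i = 0 then x₀ else x₁)).length).map y
        = (List.range n).flatMap (fun i => if w i = 0 then x₀ else x₁)) :
    Aperiodic' y := by
  rintro ⟨p, hp, N, hper⟩
  apply hw
  set b : ℕ → List S := fun i => if w i = 0 then x₀ else x₁ with hb
  set Sn : ℕ → ℕ := fun n => ((List.range n).flatMap b).length with hSn
  have hblen : ∀ i, 1 ≤ (b i).length := by
    intro i
    by_cases h : w i = 0
    · simpa [hb, h, Nat.succ_le_iff] using List.length_pos_iff.mpr h₀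
    · simpa [hb, h, Nat.succ_le_iff] using List.length_pos_iff.mpr h₁
  have hSnsucc : ∀ n, Sn (n + 1) = Sn n + (b n).length := by
    intro n
    simp [hSn, List.range_succ, List.flatMap_append]
  have hSnge : ∀ n, n ≤ Sn n := by
    intro n
    induction n with
    | zero => omega
    | succ n ihn => have := hblen n; rw [hSnsucc]; omega
  have hSnmono : ∀ {a c : ℕ}, a ≤ c → Sn a ≤ Sn c := by
    intro a c h
    exact monotone_nat_of_le_succ (fun n => by rw [hSnsucc]; omega) h
  have hblock : ∀ r, Seg y (Sn r) (b r).length = b r := by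
    intro r
    have h2 := hy (r + 1)
    rw [List.range_succ, List.flatMap_append, List.flatMap_singleton, List.length_append,
      List.range_add, List.map_append, hy r, List.map_map] at h2
    have h3 := List.append_cancel_left h2
    simpa [Seg, Function.comp_def, hSn] using h3
  have hprod : ∀ r, ProdW x₀ x₁ (shift y (Sn r)) := by
    intro r
    refine ⟨fun k => ∃ m, r ≤ m ∧ Sn m = Sn r + k, ⟨r, le_rfl, by omega⟩, ?_⟩
    rintro k ⟨m, hm, hsm⟩
    by_cases hwm : w m = 0
    · left
      constructor
      · rw [seg_shift, ← hsm]
        simpa [hb, hwm] using hblock m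
      · exact ⟨m + 1, by omega, by rw [hSnsucc, hsm]; simp [hb, hwm]; omega⟩
    · right
      constructor
      · rw [seg_shift, ← hsm]
        simpa [hb, hwm] using hblock m
      · exact ⟨m + 1, by omega, by rw [hSnsucc, hsm]; simp [hb, hwm]; omega⟩
  -- pigeonhole
  obtain ⟨i, hi, j, hj, hij, hmodeq⟩ :=
    Finset.exists_ne_map_eq_of_card_lt_of_maps_to (s := Finset.range (p + 1))
      (t := Finset.range p) (by simp) (f := fun i => Sn (N + i) % p)
      (fun a _ => Finset.mem_range.mpr (Nat.mod_lt _ (by omega)))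
  obtain ⟨n, m, hnm, hnN, hmod⟩ : ∃ n m, n < m ∧ N ≤ n ∧ Sn n % p = Sn m % p := by
    rcases Nat.lt_or_ge i j with h | h
    · exact ⟨N + i, N + j, by omega, by omega, hmodeq⟩
    · exact ⟨N + j, N + i, by omega, by omega, hmodeq.symm⟩
  have hSnle : Sn n ≤ Sn m := hSnmono (le_of_lt hnm)
  obtain ⟨c, hc⟩ : ∃ c, Sn m = Sn n + p * c := by
    obtain ⟨c, hc⟩ := (Nat.modEq_iff_dvd' hSnle).mp hmod
    exact ⟨c, by omega⟩
  have hstep : ∀ c q, N ≤ q → y (q + p * c) = y q := by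
    intro c
    induction c with
    | zero => simp
    | succ c ihc =>
      intro q hq
      rw [show q + p * (c + 1) = q + p * c + p by ring, hper _ (by omega), ihc q hq]
  have htail : ∀ i, y (Sn n + i) = y (Sn m + i) := by
    intro i
    rw [show Sn m + i = (Sn n + i) + p * c by omega]
    exact (hstep c _ (by have := hSnge n; omega)).symm
  have hfin2 : ∀ i : Fin 2, i = 0 ∨ i = 1 := by decide
  have hkey : ∀ k, Sn (n + k) + Sn m = Sn (m + k) + Sn n → w (n + k) = w (m + k) := by
    intro k hG
    by_contra hne
    set ζ := shift y (Sn (n + k)) with hζdef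
    have hζ : shift y (Sn (m + k)) = ζ := by
      funext j
      have hd : Sn n ≤ Sn (n + k) := hSnmono (by omega)
      have := htail (Sn (n + k) - Sn n + j)
      rw [show Sn n + (Sn (n + k) - Sn n + j) = Sn (n + k) + j by omega,
        show Sn m + (Sn (n + k) - Sn n + j) = Sn (m + k) + j by omega] at this
      simpa [shift, hζdef] using this.symm
    have hA : Seg ζ 0 (b (n + k)).length = b (n + k) := by
      rw [hζdef, seg_shift, Nat.add_zero]; exact hblock (n + k)
    have hA' : ProdW x₀ x₁ (shift ζ (b (n + k)).length) := by
      rw [hζdef, shift_shift, ← hSnsucc]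
      exact hprod (n + k + 1)
    have hB : Seg ζ 0 (b (m + k)).length = b (m + k) := by
      rw [← hζ, seg_shift, Nat.add_zero]; exact hblock (m + k)
    have hB' : ProdW x₀ x₁ (shift ζ (b (m + k)).length) := by
      rw [← hζ, shift_shift, ← hSnsucc]
      exact hprod (m + k + 1)
    rcases hfin2 (w (n + k)) with e1 | e1 <;> rcases hfin2 (w (m + k)) with e2 | e2
    · exact hne (e1.trans e2.symm)
    · have hne10 : (1 : Fin 2) ≠ 0 := by decide
      refine hcomm (ImgAp.main (x₀.length + x₁.length) x₀ x₁ ζ le_rfl h₀ h₁ ?_ ?_ ?_ ?_)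
      · simpa [hb, e1] using hA
      · simpa [hb, e1] using hA'
      · simpa [hb, e2, hne10] using hB
      · simpa [hb, e2, hne10] using hB'
    · have hne10 : (1 : Fin 2) ≠ 0 := by decide
      refine hcomm (ImgAp.main (x₁.length + x₀.length) x₁ x₀ ζ le_rfl h₁ h₀ ?_ ?_ ?_ ?_).symm
      · simpa [hb, e1, hne10] using hA
      · simpa [hb, e1, hne10] using hA'.swap
      · simpa [hb, e2] using hB
      · simpa [hb, e2] using hB'.swap
    · exact hne (e1.trans e2.symm)
  have hG : ∀ k, Sn (n + k) + Sn m = Sn (m + k) + Sn n := by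
    intro k
    induction k with
    | zero => simp; omega
    | succ k ihk =>
      have hwk := hkey k ihk
      have hlen : (b (n + k)).length = (b (m + k)).length := by rw [hb]; simp [hwk]
      rw [show n + (k + 1) = (n + k) + 1 by omega, show m + (k + 1) = (m + k) + 1 by omega,
        hSnsucc, hSnsucc]
      omega
  refine ⟨m - n, by omega, n, fun j hj => ?_⟩
  have := hkey (j - n) (hG (j - n))
  rw [show n + (j - n) = j by omega, show m + (j - n) = j + (m - n) by omega] at this
  exact this.symm
end

section
/- Let e(n) denote the number of words of length n over {0,1,2,3} all of whose palindromic factors lie in {ε, 0, 1, 2, 3} (no palindromic factor of length ≥ 2). Then e(n) = 3·2^n for all n ≥ 2. -/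
def okb : Fin 4 → List (Fin 4) → Bool
  | _, [] => true
  | a, [b] => a != b
  | a, b :: c :: _ => a != b && a != c

def goodb : List (Fin 4) → Bool
  | [] => true
  | a :: t => okb a t && goodb t

lemma isFactor_cons {α : Type*} {y t : List α} (a : α) (h : IsFactor y t) :
    IsFactor y (a :: t) := by
  obtain ⟨u, v, rfl⟩ := h
  exact ⟨a :: u, v, rfl⟩

lemma isFactor_trans {α : Type*} {z y x : List α} (h1 : IsFactor z y) (h2 : IsFactor y x) :
    IsFactor z x := by
  obtain ⟨u, v, rfl⟩ := h1
  obtain ⟨s, t, rfl⟩ := h2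
  exact ⟨s ++ u, v ++ t, by simp⟩

lemma goodb_iff (w : List (Fin 4)) :
    goodb w = true ↔ (∀ x, ¬ IsFactor [x, x] w) ∧ (∀ x y, ¬ IsFactor [x, y, x] w) := by
  induction w with
  | nil =>
    simp only [goodb, true_iff]
    constructor
    · rintro x ⟨u, v, h⟩
      have := congrArg List.length h
      simp only [List.length_nil, List.length_append, List.length_cons] at this
      omega
    · rintro x y ⟨u, v, h⟩
      have := congrArg List.length h
      simp only [List.length_nil, List.length_append, List.length_cons] at this
      omega
  | cons a t ih =>
    simp only [goodb, Bool.and_eq_true, ih]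
    constructor
    · rintro ⟨hok, h1, h2⟩
      constructor
      · rintro x ⟨u, v, h⟩
        rcases u with _ | ⟨e, u⟩
        · simp only [List.nil_append, List.cons_append, List.cons.injEq] at h
          obtain ⟨rfl, rfl⟩ := h
          rcases v with _ | ⟨c, v⟩ <;> simp [okb] at hok
        · simp only [List.cons_append, List.cons.injEq] at h
          exact h1 x ⟨u, v, h.2⟩
      · rintro x y ⟨u, v, h⟩
        rcases u with _ | ⟨e, u⟩
        · simp only [List.nil_append, List.cons_append, List.cons.injEq] at h
          obtain ⟨rfl, rfl⟩ := h
          simp [okb] at hok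
        · simp only [List.cons_append, List.cons.injEq] at h
          exact h2 x y ⟨u, v, h.2⟩
    · rintro ⟨h1, h2⟩
      refine ⟨?_, fun x hf => h1 x (isFactor_cons a hf),
        fun x y hf => h2 x y (isFactor_cons a hf)⟩
      rcases t with _ | ⟨b, _ | ⟨c, t⟩⟩
      · rfl
      · simp only [okb, bne_iff_ne, ne_eq, decide_eq_true_eq]
        intro h; subst h
        exact h1 a ⟨[], [], rfl⟩
      · simp only [okb, Bool.and_eq_true, bne_iff_ne, ne_eq]
        constructor
        · intro h; subst h
          exact h1 a ⟨[], c :: t, rfl⟩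
        · intro h; subst h
          exact h2 a b ⟨[], t, rfl⟩

lemma pal_small_factor {w : List (Fin 4)} (hp : w.Palindrome) :
    2 ≤ w.length → (∃ x, IsFactor [x, x] w) ∨ ∃ x y, IsFactor [x, y, x] w := by
  induction hp with
  | nil => intro h; simp at h
  | singleton a => intro h; simp at h
  | cons_concat x hl ih =>
    rename_i l
    intro _
    rcases l with _ | ⟨y, _ | ⟨z, l⟩⟩
    · exact Or.inl ⟨x, [], [], rfl⟩
    · exact Or.inr ⟨x, y, [], [], rfl⟩
    · have h2 : 2 ≤ (y :: z :: l).length := by simp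
      have hlift : ∀ u : List (Fin 4), IsFactor u (y :: z :: l) →
          IsFactor u (x :: (y :: z :: l) ++ [x]) := by
        rintro u ⟨s, t, h⟩
        exact ⟨x :: s, t ++ [x], by simp [h]⟩
      rcases ih h2 with ⟨a, hf⟩ | ⟨a, b, hf⟩
      · exact Or.inl ⟨a, hlift _ hf⟩
      · exact Or.inr ⟨a, b, hlift _ hf⟩

lemma key_iff (w : List (Fin 4)) :
    (∀ u, IsFactor u w → IsPal u → u.length ≤ 1) ↔ goodb w = true := by
  rw [goodb_iff]
  constructor
  · intro h
    constructor
    · intro x hf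
      have := h _ hf (by simp [IsPal])
      simp at this
    · intro x y hf
      have := h _ hf (by simp [IsPal])
      simp at this
  · rintro ⟨h1, h2⟩ u hf hp
    by_contra hlen
    push_neg at hlen
    have hpal : u.Palindrome := List.Palindrome.of_reverse_eq hp
    rcases pal_small_factor hpal hlen with ⟨a, hf'⟩ | ⟨a, b, hf'⟩
    · exact h1 a (isFactor_trans hf' hf)
    · exact h2 a b (isFactor_trans hf' hf)

def F : ℕ → Finset (List (Fin 4))
  | 0 => {[]}
  | n + 1 => (F n).biUnion fun w =>
      (Finset.univ.filter fun a => okb a w).image fun a => a :: w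

lemma mem_F : ∀ n w, w ∈ F n ↔ w.length = n ∧ goodb w = true := by
  intro n
  induction n with
  | zero =>
    intro w
    simp only [F, Finset.mem_singleton]
    constructor
    · rintro rfl; exact ⟨rfl, rfl⟩
    · rintro ⟨h, _⟩; exact List.length_eq_zero_iff.mp h
  | succ n ih =>
    intro w
    simp only [F, Finset.mem_biUnion, Finset.mem_image, Finset.mem_filter, Finset.mem_univ,
      true_and]
    constructor
    · rintro ⟨t, ht, a, hok, rfl⟩
      obtain ⟨hlen, hg⟩ := (ih t).mp ht
      refine ⟨by simp [hlen], ?_⟩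
      simp [goodb, hok, hg]
    · rintro ⟨hlen, hg⟩
      rcases w with _ | ⟨a, t⟩
      · simp at hlen
      · simp only [goodb, Bool.and_eq_true] at hg
        exact ⟨t, (ih t).mpr ⟨by simpa using hlen, hg.2⟩, a, hg.1, rfl⟩

lemma count2 : ∀ b c : Fin 4, b ≠ c →
    (Finset.univ.filter fun a : Fin 4 => okb a (b :: c :: ([] : List (Fin 4)))).card = 2 := by
  decide

lemma okb_eq (b c : Fin 4) (t : List (Fin 4)) (a : Fin 4) :
    okb a (b :: c :: t) = okb a (b :: c :: []) := rfl

lemma card_F_succ (n : ℕ) (hn : 2 ≤ n) : (F (n + 1)).card = 2 * (F n).card := by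
  show ((F n).biUnion fun w =>
      (Finset.univ.filter fun a => okb a w).image fun a => a :: w).card = _
  have hdisj : ∀ w ∈ F n, ∀ w' ∈ F n, w ≠ w' →
      Disjoint ((Finset.univ.filter fun a => okb a w).image fun a => a :: w)
        ((Finset.univ.filter fun a => okb a w').image fun a => a :: w') := by
    intro w hw w' hw' hne
    simp only [Finset.disjoint_left, Finset.mem_image]
    rintro x ⟨a, _, rfl⟩ ⟨a', _, h⟩
    simp only [List.cons.injEq] at h
    exact hne h.2.symm
  rw [Finset.card_biUnion hdisj]
  have hterm : ∀ w ∈ F n,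
      ((Finset.univ.filter fun a => okb a w).image fun a => a :: w).card = 2 := by
    intro w hw
    rw [Finset.card_image_of_injective _ (fun a a' h => by injection h)]
    obtain ⟨hlen, hg⟩ := (mem_F n w).mp hw
    rcases w with _ | ⟨b, _ | ⟨c, t⟩⟩
    · simp at hlen; omega
    · simp at hlen; omega
    · have hbc : b ≠ c := by
        rcases t with _ | ⟨d, t⟩ <;> simp [goodb, okb, bne_iff_ne] at hg <;> tauto
      calc (Finset.univ.filter fun a => okb a (b :: c :: t)).card
          = (Finset.univ.filter fun a : Fin 4 => okb a (b :: c :: [])).card := by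
            simp only [okb_eq]; rfl
        _ = 2 := count2 b c hbc
  rw [Finset.sum_congr rfl hterm, Finset.sum_const, smul_eq_mul, mul_comm]

lemma card_F_two : (F 2).card = 12 := by decide

lemma card_F (n : ℕ) (hn : 2 ≤ n) : (F n).card = 3 * 2 ^ n := by
  obtain ⟨m, rfl⟩ : ∃ m, n = 2 + m := ⟨n - 2, by omega⟩
  induction m with
  | zero => simpa using card_F_two
  | succ m ih =>
    have : 2 + (m + 1) = (2 + m) + 1 := by omega
    rw [this, card_F_succ _ (by omega), ih (by omega)]
    ring

/-- The number of words of length `n` over a 4-letter alphabet all of whose palindromic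
factors lie in `{ε, 0, 1, 2, 3}` (i.e., have length ≤ 1) equals `3·2^n` for `n ≥ 2`. -/
theorem count_quaternary_no_palindrome (n : ℕ) (hn : 2 ≤ n) :
    {w : List (Fin 4) | w.length = n ∧
      ∀ u, IsFactor u w → IsPal u → u.length ≤ 1}.ncard = 3 * 2 ^ n := by
  have hset : {w : List (Fin 4) | w.length = n ∧
      ∀ u, IsFactor u w → IsPal u → u.length ≤ 1} = ↑(F n) := by
    ext w
    simp only [Set.mem_setOf_eq, Finset.coe_mem, Finset.mem_coe, mem_F, key_iff]
  rw [hset, Set.ncard_coe_finset, card_F n hn]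
end
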